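/- If some r_j > 0 (the random walk is aperiodic), then the sequence ((−1)^n Q_n(−1))_{n≥0} is strictly increasing for all sufficiently large n. -/

import Mathlib

open Finset Filter

theorem stmt7 (p q r : ℕ → ℝ) (Q : ℕ → ℝ → ℝ)
    (hp : ∀ j, 0 < p j) (hq : ∀ j, 0 < q (j + 1)) (hr : ∀ j, 0 ≤ r j)
    (hq0 : q 0 = 0) (hs : ∀ j, p j + q j + r j = 1)
    (hQ0 : ∀ x : ℝ, Q 0 x = 1) (hQ1 : ∀ x : ℝ, p 0 * Q 1 x = x - r 0)
    (hQrec : ∀ n : ℕ, ∀ x : ℝ, x * Q (n + 1) x =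
      q (n + 1) * Q n x + r (n + 1) * Q (n + 1) x + p (n + 1) * Q (n + 2) x)
    (haper : ∃ j, 0 < r j) :
    ∃ N : ℕ, ∀ n ≥ N, (-1 : ℝ) ^ n * Q n (-1) < (-1 : ℝ) ^ (n + 1) * Q (n + 1) (-1) := by
  set A : ℕ → ℝ := fun n => (-1 : ℝ) ^ n * Q n (-1) with hA
  have key : ∀ n, p (n+1) * A (n+2) = A (n+1) + r (n+1) * A (n+1) - q (n+1) * A n := by
    intro n
    have h := hQrec n (-1)
    simp only [hA]
    linear_combination (-(-1:ℝ)^n) * h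
  have diff : ∀ n, p (n+1) * (A (n+2) - A (n+1)) =
      q (n+1) * (A (n+1) - A n) + 2 * r (n+1) * A (n+1) := by
    intro n
    linear_combination key n - A (n+1) * hs (n+1)
  have base : p 0 * (A 1 - A 0) = 2 * r 0 := by
    have h1 := hQ1 (-1)
    have h0 := hQ0 (-1)
    simp only [hA]
    linear_combination (-1 : ℝ) * h1 + (- p 0) * h0 - hs 0 + hq0
  have mono : ∀ n, 1 ≤ A n ∧ A n ≤ A (n+1) := by
    intro n
    induction n with
    | zero =>
      constructor
      · simp [hA, hQ0]
      · show A 0 ≤ A 1; nlinarith [hp 0, hr 0, base]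
    | succ m ih =>
      have h1 : 1 ≤ A (m+1) := le_trans ih.1 ih.2
      refine ⟨h1, ?_⟩
      have hd := diff m
      nlinarith [hp (m+1), hq m, hr (m+1), ih.2, h1]
  have pos : ∀ j, 0 < r j → 0 < A (j+1) - A j := by
    intro j hj
    cases j with
    | zero => show 0 < A 1 - A 0; nlinarith [hp 0, base]
    | succ m =>
      have hd := diff m
      have h1 : 1 ≤ A (m+1) := (mono (m+1)).1
      have h2 := (mono m).2
      nlinarith [hp (m+1), hq m]
  have step : ∀ n, 0 < A (n+1) - A n → 0 < A (n+2) - A (n+1) := by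
    intro n h
    have hd := diff n
    have h1 : (0:ℝ) ≤ A (n+1) := le_trans zero_le_one (mono (n+1)).1
    nlinarith [hp (n+1), hq n, hr (n+1)]
  obtain ⟨j, hj⟩ := haper
  have hall : ∀ k, 0 < A (j+k+1) - A (j+k) := by
    intro k
    induction k with
    | zero => exact pos j hj
    | succ m ih => exact step (j+m) ih
  refine ⟨j, fun n hn => ?_⟩
  obtain ⟨k, rfl⟩ := Nat.exists_eq_add_of_le hn
  have hlt : A (j+k) < A (j+k+1) := by have := hall k; linarith
  simpa only [hA] using hlt
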